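/- For half-integers j_A, j_B > 0, the maximum over L ∈ {|j_A−j_B|, |j_A−j_B|+1, ..., j_A+j_B} of κ(L) := (j_A(j_A+1) + j_B(j_B+1) − L(L+1))/(2j_A(j_A+1)) is attained at L = |j_A−j_B| and equals j_B/j_A when j_A ≥ j_B, and (j_B+1)/(j_A+1) when j_A < j_B. -/
import Mathlib


theorem stmt_8 (a b : ℕ) (ha : 0 < a) (hb : 0 < b)
    (jA jB : ℝ) (hjA : jA = a / 2) (hjB : jB = b / 2)
    (κ : ℝ → ℝ)
    (hκ : ∀ L : ℝ, κ L = (jA * (jA + 1) + jB * (jB + 1) - L * (L + 1)) / (2 * jA * (jA + 1))) :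
    (∀ k : ℕ, k ≤ min a b → κ (|jA - jB| + k) ≤ κ |jA - jB|) ∧
    (jA ≥ jB → κ |jA - jB| = jB / jA) ∧
    (jA < jB → κ |jA - jB| = (jB + 1) / (jA + 1)) := by
  have haR : (0:ℝ) < a := by exact_mod_cast ha
  have hbR : (0:ℝ) < b := by exact_mod_cast hb
  have hjA0 : 0 < jA := by rw [hjA]; linarith
  have hjB0 : 0 < jB := by rw [hjB]; linarith
  have hD : 0 < 2 * jA * (jA + 1) := by positivity
  refine ⟨?_, ?_, ?_⟩
  · intro k _
    rw [hκ, hκ]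
    have h0 : 0 ≤ |jA - jB| := abs_nonneg _
    have hk0 : (0:ℝ) ≤ k := Nat.cast_nonneg k
    apply div_le_div_of_nonneg_right ?_ hD.le
    nlinarith [mul_nonneg h0 hk0]
  · intro h
    rw [hκ, abs_of_nonneg (by linarith)]
    field_simp
    ring
  · intro h
    rw [hκ, abs_of_neg (by linarith)]
    field_simp
    ring
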